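/- Let k ≥ 1 be an integer and N > 1 a real number, set E = exp^{(k)}(2N), and let Φ⁰_{k,N}(t) = t·(ln t)²·(ln^{(2)} t)²⋯(ln^{(k−1)} t)²·(ln^{(k)} t)^{2N} for t ≥ E, extended by Φ⁰_{k,N}(t) = t·(ln E)²·(ln^{(2)} E)²⋯(ln^{(k)} E)^{2N} for 0 ≤ t ≤ E. Let Φ̃⁰ be the Young conjugate of Φ⁰_{k,N}. Then there exists a constant C_{k,N} > 0 such that for all s ≥ Φ⁰_{k,N}(E), the generalized inverse satisfies (Φ̃⁰)^{-1}(s) ≥ C_{k,N}·(ln s)²·(ln^{(2)} s)²⋯(ln^{(k−1)} s)²·(ln^{(k)} s)^{2N}. -/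

import Mathlib

/-- The Young function `Φ⁰_{k,N}` from the paper:
`Φ⁰(t) = t·(ln t)²·(ln^[2] t)²⋯(ln^[k-1] t)²·(ln^[k] t)^(2N)` for `t ≥ E = exp^[k](2N)`,
extended linearly (freezing the logarithmic factors at `E`) for `0 ≤ t ≤ E`. -/
noncomputable def Phi0 (k : ℕ) (N : ℝ) (t : ℝ) : ℝ :=
  if Real.exp^[k] (2 * N) ≤ t then
    t * (∏ i ∈ Finset.Ico 1 k, (Real.log^[i] t) ^ 2) * (Real.log^[k] t) ^ (2 * N)
  else
    t * (∏ i ∈ Finset.Ico 1 k, (Real.log^[i] (Real.exp^[k] (2 * N))) ^ 2) *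
      (Real.log^[k] (Real.exp^[k] (2 * N))) ^ (2 * N)

/-- Young conjugate: `Φ̃(s) = sup_{t ≥ 0} (s·t − Φ(t))`. -/
noncomputable def youngConj (Φ : ℝ → ℝ) (s : ℝ) : ℝ :=
  sSup ((fun t => s * t - Φ t) '' Set.Ici 0)

/-- Generalized inverse of an increasing function: `F⁻¹(s) = inf {t ≥ 0 : F(t) ≥ s}`. -/
noncomputable def genInv (F : ℝ → ℝ) (s : ℝ) : ℝ :=
  sInf {t : ℝ | 0 ≤ t ∧ s ≤ F t}


open Real Finset

lemma logIter_expIter (k : ℕ) (x : ℝ) : Real.log^[k] (Real.exp^[k] x) = x := by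
  induction k with
  | zero => simp
  | succ n ih =>
    rw [Function.iterate_succ_apply' Real.exp, Function.iterate_succ_apply Real.log,
      Real.log_exp, ih]

lemma le_expIter (m : ℕ) (x : ℝ) : x ≤ Real.exp^[m] x := by
  induction m with
  | zero => simp
  | succ n ih =>
    rw [Function.iterate_succ_apply' Real.exp]
    exact ih.trans (by linarith [Real.add_one_le_exp (Real.exp^[n] x)])

lemma expIter_mono (m : ℕ) {x y : ℝ} (h : x ≤ y) : Real.exp^[m] x ≤ Real.exp^[m] y := by
  induction m with
  | zero => simpa
  | succ n ih =>
    rw [Function.iterate_succ_apply' Real.exp, Function.iterate_succ_apply' Real.exp]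
    exact Real.exp_le_exp.2 ih

lemma expIter_le_expIter {m n : ℕ} (hmn : m ≤ n) {x y : ℝ} (h : x ≤ y) :
    Real.exp^[m] x ≤ Real.exp^[n] y := by
  have : Real.exp^[n] y = Real.exp^[m] (Real.exp^[n - m] y) := by
    rw [← Function.iterate_add_apply, Nat.add_sub_cancel' hmn]
  rw [this]
  exact expIter_mono m (h.trans (le_expIter _ _))

lemma expIter_pos (m : ℕ) {x : ℝ} (hx : 0 < x) : 0 < Real.exp^[m] x :=
  hx.trans_le (le_expIter m x)

lemma logIter_key (j : ℕ) {c x y : ℝ} (hx : Real.exp^[j] c ≤ x) (hxy : x ≤ y) :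
    c ≤ Real.log^[j] x ∧ Real.log^[j] x ≤ Real.log^[j] y := by
  induction j generalizing x y with
  | zero => exact ⟨hx, hxy⟩
  | succ n ih =>
    rw [Function.iterate_succ_apply' Real.exp] at hx
    have hx0 : 0 < x := (Real.exp_pos _).trans_le hx
    have h1 : Real.exp^[n] c ≤ Real.log x := by
      have := Real.log_le_log (Real.exp_pos _) hx
      rwa [Real.log_exp] at this
    have h2 : Real.log x ≤ Real.log y := Real.log_le_log hx0 hxy
    rw [Function.iterate_succ_apply Real.log, Function.iterate_succ_apply Real.log]
    exact ih h1 h2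

lemma logIter_le_self (m : ℕ) {y : ℝ} (hy : Real.exp^[m] 1 ≤ y) : Real.log^[m] y ≤ y := by
  induction m generalizing y with
  | zero => simp
  | succ n ih =>
    rw [Function.iterate_succ_apply' Real.exp] at hy
    have hy0 : 0 < y := (Real.exp_pos _).trans_le hy
    have h1 : Real.exp^[n] 1 ≤ Real.log y := by
      have := Real.log_le_log (Real.exp_pos _) hy
      rwa [Real.log_exp] at this
    rw [Function.iterate_succ_apply Real.log]
    exact (ih h1).trans ((Real.log_le_sub_one_of_pos hy0).trans (by linarith))

noncomputable def hFun (k : ℕ) (N : ℝ) (s : ℝ) : ℝ :=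
  (∏ i ∈ Finset.Ico 1 k, (Real.log^[i] s) ^ 2) * (Real.log^[k] s) ^ (2 * N)

section
variable {k : ℕ} {N : ℝ}

lemma logIter_ge {c x y : ℝ} (hc : Real.exp^[k] c ≤ x) (hxy : x ≤ y) {i : ℕ} (hik : i ≤ k) :
    Real.exp^[k - i] c ≤ Real.log^[i] x ∧ Real.log^[i] x ≤ Real.log^[i] y := by
  have hE : Real.exp^[i] (Real.exp^[k - i] c) ≤ x := by
    rwa [← Function.iterate_add_apply, Nat.add_sub_cancel' hik]
  exact logIter_key i hE hxy

lemma logIter_one_le {c x y : ℝ} (hc : 1 ≤ c) (hx : Real.exp^[k] c ≤ x) (hxy : x ≤ y)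
    {i : ℕ} (hik : i ≤ k) : 1 ≤ Real.log^[i] x ∧ Real.log^[i] x ≤ Real.log^[i] y := by
  obtain ⟨h1, h2⟩ := logIter_ge hx hxy hik
  exact ⟨hc.trans ((le_expIter _ _).trans h1), h2⟩

lemma hFun_le_hFun (hN : 1 < N) {x y : ℝ} (hx : Real.exp^[k] (2 * N) ≤ x) (hxy : x ≤ y) :
    hFun k N x ≤ hFun k N y := by
  have h2N : (1 : ℝ) ≤ 2 * N := by linarith
  unfold hFun
  have hb : ∀ i, i ≤ k → 1 ≤ Real.log^[i] x ∧ Real.log^[i] x ≤ Real.log^[i] y :=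
    fun i hik => logIter_one_le h2N hx hxy hik
  have hp1 : (∏ i ∈ Finset.Ico 1 k, (Real.log^[i] x) ^ 2) ≤
      ∏ i ∈ Finset.Ico 1 k, (Real.log^[i] y) ^ 2 := by
    refine Finset.prod_le_prod (fun i _ => sq_nonneg _) (fun i hi => ?_)
    have h := hb i (Finset.mem_Ico.1 hi).2.le
    exact pow_le_pow_left₀ (by linarith [h.1]) h.2 2
  have hr : (Real.log^[k] x) ^ (2*N) ≤ (Real.log^[k] y) ^ (2*N) :=
    Real.rpow_le_rpow (by linarith [(hb k le_rfl).1]) (hb k le_rfl).2 (by linarith)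
  exact mul_le_mul hp1 hr (Real.rpow_nonneg (by linarith [(hb k le_rfl).1]) _)
    (Finset.prod_nonneg fun i _ => sq_nonneg _)

lemma one_le_hFun (hN : 1 < N) {x : ℝ} (hx : Real.exp^[k] (2 * N) ≤ x) : 1 ≤ hFun k N x := by
  have h2N : (1 : ℝ) ≤ 2 * N := by linarith
  have hb : ∀ i, i ≤ k → 1 ≤ Real.log^[i] x :=
    fun i hik => (logIter_one_le h2N hx le_rfl hik).1
  have h1 : (1:ℝ) ≤ ∏ i ∈ Finset.Ico 1 k, (Real.log^[i] x) ^ 2 := by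
    have := Finset.prod_le_prod (f := fun _ => (1:ℝ))
      (g := fun i => (Real.log^[i] x) ^ 2) (s := Finset.Ico 1 k)
      (fun i _ => zero_le_one)
      (fun i hi => one_le_pow₀ (hb i (Finset.mem_Ico.1 hi).2.le))
    simpa using this
  have h2 : (1:ℝ) ≤ (Real.log^[k] x) ^ (2 * N) := by
    calc (1:ℝ) = 1 ^ (2*N) := (Real.one_rpow _).symm
    _ ≤ _ := Real.rpow_le_rpow zero_le_one (hb k le_rfl) (by linarith)
  unfold hFun
  nlinarith

end

section
variable {k : ℕ} {N : ℝ}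

lemma one_le_prodLog {c x : ℝ} (hc : 1 ≤ c) (hx : Real.exp^[k] c ≤ x) :
    1 ≤ ∏ i ∈ Finset.Ico 1 k, (Real.log^[i] x) ^ 2 := by
  have := Finset.prod_le_prod (f := fun _ => (1:ℝ))
    (g := fun i => (Real.log^[i] x) ^ 2) (s := Finset.Ico 1 k)
    (fun i _ => zero_le_one)
    (fun i hi => one_le_pow₀ ((logIter_one_le hc hx le_rfl (Finset.mem_Ico.1 hi).2.le)).1)
  simpa using this

lemma Phi0_eq (k : ℕ) (N t : ℝ) :
    Phi0 k N t = if Real.exp^[k] (2 * N) ≤ t then t * hFun k N t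
      else t * hFun k N (Real.exp^[k] (2 * N)) := by
  unfold Phi0 hFun
  split <;> rw [mul_assoc]

lemma Phi0_of_le {t : ℝ} (ht : Real.exp^[k] (2 * N) ≤ t) :
    Phi0 k N t = t * hFun k N t := by rw [Phi0_eq, if_pos ht]

lemma Phi0_nonneg (hN : 1 < N) {t : ℝ} (ht : 0 ≤ t) : 0 ≤ Phi0 k N t := by
  rw [Phi0_eq]
  split
  case isTrue h => exact mul_nonneg ht (zero_le_one.trans (one_le_hFun hN h))
  case isFalse h => exact mul_nonneg ht (zero_le_one.trans (one_le_hFun hN le_rfl))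

lemma Phi0_young_bound (hN : 1 < N) {t u : ℝ} (ht : 0 ≤ t)
    (hu : Real.exp^[k] (2 * N) ≤ u) (htu : t ≤ hFun k N u) :
    ∀ b ∈ (fun v => t * v - Phi0 k N v) '' Set.Ici 0, b ≤ t * u := by
  have hu0 : 0 < u := (expIter_pos k (by linarith)).trans_le hu
  rintro b ⟨v, hv, rfl⟩
  simp only [Set.mem_Ici] at hv
  rcases le_total v u with h | h
  · have h0 : 0 ≤ Phi0 k N v := Phi0_nonneg hN hv
    have : t * v ≤ t * u := mul_le_mul_of_nonneg_left h ht
    simp only; linarith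
  · have hEv : Real.exp^[k] (2 * N) ≤ v := hu.trans h
    simp only [Phi0_of_le hEv]
    have h1 : t ≤ hFun k N v := htu.trans (hFun_le_hFun hN hu h)
    have hv0 : 0 ≤ v := hv
    nlinarith [mul_nonneg ht hu0.le]

lemma exists_good_u (hN : 1 < N) {t : ℝ} (ht : 0 ≤ t) :
    ∃ u, Real.exp^[k] (2 * N) ≤ u ∧ t ≤ hFun k N u := by
  refine ⟨Real.exp^[k] (max t (2 * N)), expIter_mono k (le_max_right _ _), ?_⟩
  have hm1 : (1:ℝ) ≤ max t (2 * N) := le_trans (by linarith) (le_max_right _ _)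
  have hL : Real.log^[k] (Real.exp^[k] (max t (2*N))) = max t (2*N) := logIter_expIter k _
  have h2 : t ≤ (max t (2*N)) ^ (2*N) := by
    calc t ≤ max t (2*N) := le_max_left _ _
    _ = (max t (2*N)) ^ (1:ℝ) := (Real.rpow_one _).symm
    _ ≤ (max t (2*N)) ^ (2*N) := Real.rpow_le_rpow_of_exponent_le hm1 (by linarith)
  have h1 : (1:ℝ) ≤ ∏ i ∈ Finset.Ico 1 k, (Real.log^[i] (Real.exp^[k] (max t (2*N)))) ^ 2 :=
    one_le_prodLog hm1 le_rfl
  unfold hFun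
  rw [hL]
  calc t ≤ (max t (2*N)) ^ (2*N) := h2
  _ ≤ _ := le_mul_of_one_le_left (Real.rpow_nonneg (by linarith) _) h1

lemma bddAbove_young (hN : 1 < N) {t : ℝ} (ht : 0 ≤ t) :
    BddAbove ((fun v => t * v - Phi0 k N v) '' Set.Ici 0) := by
  obtain ⟨u, hu, htu⟩ := exists_good_u hN ht (k := k)
  exact ⟨t * u, Phi0_young_bound hN ht hu htu⟩

lemma youngConj_le' (hN : 1 < N) {t u : ℝ} (ht : 0 ≤ t)
    (hu : Real.exp^[k] (2 * N) ≤ u) (htu : t ≤ hFun k N u) :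
    youngConj (Phi0 k N) t ≤ t * u := by
  have hu0 : 0 < u := (expIter_pos k (by linarith)).trans_le hu
  exact Real.sSup_le (Phi0_young_bound hN ht hu htu) (mul_nonneg ht hu0.le)

lemma le_youngConj' (hN : 1 < N) {t : ℝ} (ht : 0 ≤ t) :
    t * Real.exp^[k] (2*N) - Phi0 k N (Real.exp^[k] (2*N)) ≤ youngConj (Phi0 k N) t := by
  apply le_csSup (bddAbove_young hN ht)
  exact ⟨Real.exp^[k] (2*N), Set.mem_Ici.2 (expIter_pos k (by linarith)).le, rfl⟩

end

section
variable {k : ℕ} {N : ℝ}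

lemma logIter_two {k : ℕ} {s : ℝ} (hs : Real.exp^[k] 2 ≤ s) {i : ℕ} (hik : i ≤ k) :
    2 ≤ Real.log^[i] s :=
  (le_expIter _ _).trans (logIter_ge hs le_rfl hik).1

lemma logIter_sqrt {k : ℕ} {s : ℝ} (hs : Real.exp^[k] 2 ≤ s) :
    ∀ j, j + 1 ≤ k → 2⁻¹ * Real.log^[j+1] s ≤ Real.log^[j+1] (Real.sqrt s) := by
  have hs0 : 0 < s := (expIter_pos k (by norm_num)).trans_le hs
  intro j
  induction j with
  | zero =>
    intro _
    show 2⁻¹ * Real.log s ≤ Real.log (Real.sqrt s)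
    rw [Real.log_sqrt hs0.le]
    exact le_of_eq (by ring)
  | succ n ih =>
    intro hjk
    have ihn := ih (by omega)
    have hlow : 2 ≤ Real.log^[n+1] s := logIter_two hs (by omega)
    have hlow2 : 2 ≤ Real.log^[n+1+1] s := logIter_two hs hjk
    have hpos : 0 < 2⁻¹ * Real.log^[n+1] s := by linarith
    have e1 : Real.log^[n+1+1] (Real.sqrt s) = Real.log (Real.log^[n+1] (Real.sqrt s)) :=
      Function.iterate_succ_apply' Real.log (n+1) (Real.sqrt s)
    have e2 : Real.log^[n+1+1] s = Real.log (Real.log^[n+1] s) :=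
      Function.iterate_succ_apply' Real.log (n+1) s
    have h1 : Real.log (2⁻¹ * Real.log^[n+1] s) ≤ Real.log^[n+1+1] (Real.sqrt s) := by
      rw [e1]; exact Real.log_le_log hpos ihn
    have h2 : Real.log (2⁻¹ * Real.log^[n+1] s) = Real.log^[n+1+1] s - Real.log 2 := by
      rw [e2, Real.log_mul (by norm_num) (by linarith), Real.log_inv]; ring
    have hln2 : Real.log 2 < 1 := by
      have := Real.log_two_lt_d9; linarith
    linarith

lemma logIter_le_log {k : ℕ} (hk : 1 ≤ k) {s : ℝ} (hs : Real.exp^[k] 2 ≤ s)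
    {i : ℕ} (h1 : 1 ≤ i) (hik : i ≤ k) : Real.log^[i] s ≤ Real.log s := by
  obtain ⟨m, rfl⟩ : ∃ m, i = m + 1 := ⟨i - 1, by omega⟩
  rw [Function.iterate_succ_apply Real.log]
  apply logIter_le_self
  have hls : Real.exp^[k-1] 2 ≤ Real.log s := by
    have := (logIter_ge hs le_rfl hk).1
    simpa using this
  exact le_trans (expIter_le_expIter (by omega) (by norm_num)) hls

lemma hFun_sqrt (hk : 1 ≤ k) (hN : 1 < N) {s : ℝ} (hs2 : Real.exp^[k] 2 ≤ s)
    (hsE : Real.exp^[k] (2*N) ≤ s) :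
    (4⁻¹:ℝ)^k * (2⁻¹:ℝ)^(2*N) * hFun k N s ≤ hFun k N (Real.sqrt s) := by
  have h2N0 : (0:ℝ) ≤ 2*N := by linarith
  have hhalf : ∀ i, 1 ≤ i → i ≤ k → 2⁻¹ * Real.log^[i] s ≤ Real.log^[i] (Real.sqrt s) := by
    intro i h1 h2
    obtain ⟨m, rfl⟩ : ∃ m, i = m + 1 := ⟨i - 1, by omega⟩
    exact logIter_sqrt hs2 m h2
  have hpos : ∀ i, i ≤ k → 2 ≤ Real.log^[i] s := fun i h => logIter_two hs2 h
  have hp1 : (∏ i ∈ Finset.Ico 1 k, (2⁻¹ * Real.log^[i] s) ^ 2) ≤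
      ∏ i ∈ Finset.Ico 1 k, (Real.log^[i] (Real.sqrt s)) ^ 2 := by
    refine Finset.prod_le_prod (fun i _ => sq_nonneg _) (fun i hi => ?_)
    obtain ⟨hi1, hi2⟩ := Finset.mem_Ico.1 hi
    refine pow_le_pow_left₀ ?_ (hhalf i hi1 hi2.le) 2
    have := hpos i hi2.le; linarith
  have hr1 : (2⁻¹ * Real.log^[k] s) ^ (2*N) ≤ (Real.log^[k] (Real.sqrt s)) ^ (2*N) := by
    refine Real.rpow_le_rpow ?_ (hhalf k hk le_rfl) h2N0
    have := hpos k le_rfl; linarith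
  have hprod_eq : (∏ i ∈ Finset.Ico 1 k, (2⁻¹ * Real.log^[i] s) ^ 2) =
      (4⁻¹:ℝ)^(k-1) * ∏ i ∈ Finset.Ico 1 k, (Real.log^[i] s) ^ 2 := by
    calc (∏ i ∈ Finset.Ico 1 k, (2⁻¹ * Real.log^[i] s) ^ 2)
        = ∏ i ∈ Finset.Ico 1 k, ((4⁻¹:ℝ) * (Real.log^[i] s) ^ 2) :=
          Finset.prod_congr rfl (fun i _ => by ring)
      _ = (∏ _i ∈ Finset.Ico 1 k, (4⁻¹:ℝ)) * ∏ i ∈ Finset.Ico 1 k, (Real.log^[i] s) ^ 2 :=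
          Finset.prod_mul_distrib
      _ = _ := by rw [Finset.prod_const, Nat.card_Ico]
  have hL0 : (0:ℝ) ≤ Real.log^[k] s := by linarith [hpos k le_rfl]
  have hrpow_eq : (2⁻¹ * Real.log^[k] s) ^ (2*N) =
      (2⁻¹:ℝ)^(2*N) * (Real.log^[k] s) ^ (2*N) :=
    Real.mul_rpow (by norm_num) hL0
  have hmain : (4⁻¹:ℝ)^(k-1) * (2⁻¹:ℝ)^(2*N) * hFun k N s ≤ hFun k N (Real.sqrt s) := by
    have h := mul_le_mul hp1 hr1
      (Real.rpow_nonneg (by linarith [hpos k le_rfl]) _)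
      (Finset.prod_nonneg fun i _ => sq_nonneg _)
    rw [hprod_eq, hrpow_eq] at h
    unfold hFun
    calc (4⁻¹:ℝ)^(k-1) * (2⁻¹:ℝ)^(2*N) *
          ((∏ i ∈ Finset.Ico 1 k, (Real.log^[i] s) ^ 2) * (Real.log^[k] s) ^ (2*N))
        = (4⁻¹:ℝ)^(k-1) * (∏ i ∈ Finset.Ico 1 k, (Real.log^[i] s) ^ 2) *
          ((2⁻¹:ℝ)^(2*N) * (Real.log^[k] s) ^ (2*N)) := by ring
      _ ≤ _ := h
  refine le_trans ?_ hmain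
  have hf0 : (0:ℝ) ≤ hFun k N s := zero_le_one.trans (one_le_hFun hN hsE)
  have h4 : ((4:ℝ)⁻¹)^k ≤ ((4:ℝ)⁻¹)^(k-1) :=
    pow_le_pow_of_le_one (by norm_num) (by norm_num) (Nat.sub_le k 1)
  have h20 : (0:ℝ) ≤ (2⁻¹:ℝ)^(2*N) := Real.rpow_nonneg (by norm_num) _
  nlinarith [mul_nonneg h20 hf0]

end

section
variable {k : ℕ} {N : ℝ}

lemma hFun_le_sqrt (hk : 1 ≤ k) (hN : 1 < N) {s : ℝ} (hs2 : Real.exp^[k] 2 ≤ s)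
    (hsM : (4*(2*(k:ℝ)+2*N)) ^ (4*(2*(k:ℝ)+2*N)) ≤ s) : hFun k N s ≤ Real.sqrt s := by
  set M : ℝ := 2*(k:ℝ) + 2*N with hM
  have hk1 : (1:ℝ) ≤ (k:ℝ) := Nat.one_le_cast.2 hk
  have hM4 : 4 ≤ M := by rw [hM]; linarith
  have hM0 : (0:ℝ) < M := by linarith
  have hs0 : 0 < s := (expIter_pos k (by norm_num)).trans_le hs2
  have hls2 : 2 ≤ Real.log s := by
    have h := logIter_two hs2 hk
    simpa using h
  have hls0 : (0:ℝ) ≤ Real.log s := by linarith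
  -- Step A
  have hp : (∏ i ∈ Finset.Ico 1 k, (Real.log^[i] s) ^ 2) ≤ (Real.log s)^(2*(k-1)) := by
    calc (∏ i ∈ Finset.Ico 1 k, (Real.log^[i] s) ^ 2)
        ≤ ∏ _i ∈ Finset.Ico 1 k, (Real.log s) ^ 2 := by
          refine Finset.prod_le_prod (fun i _ => sq_nonneg _) (fun i hi => ?_)
          obtain ⟨hi1, hi2⟩ := Finset.mem_Ico.1 hi
          refine pow_le_pow_left₀ ?_ (logIter_le_log hk hs2 hi1 hi2.le) 2
          linarith [logIter_two hs2 hi2.le]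
      _ = ((Real.log s) ^ 2)^(k-1) := by rw [Finset.prod_const, Nat.card_Ico]
      _ = (Real.log s)^(2*(k-1)) := by rw [← pow_mul]
  have hp2 : (Real.log s)^(2*(k-1)) ≤ (Real.log s)^(2*k) :=
    pow_le_pow_right₀ (by linarith) (by omega)
  have hr : (Real.log^[k] s) ^ (2*N) ≤ (Real.log s) ^ (2*N) :=
    Real.rpow_le_rpow (by linarith [logIter_two hs2 le_rfl])
      (logIter_le_log hk hs2 hk le_rfl) (by linarith)
  have hA : hFun k N s ≤ (Real.log s)^(2*k) * (Real.log s) ^ (2*N) := by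
    unfold hFun
    exact mul_le_mul (hp.trans hp2) hr
      (Real.rpow_nonneg (by linarith [logIter_two hs2 le_rfl]) _)
      (pow_nonneg hls0 _)
  -- Step B
  have hB : (Real.log s)^(2*k) * (Real.log s) ^ (2*N) = (Real.log s) ^ M := by
    rw [← Real.rpow_natCast (Real.log s) (2*k), ← Real.rpow_add (by linarith : 0 < Real.log s)]
    congr 1
    push_cast
    try ring
  -- Step C
  have hε : (0:ℝ) < (4*M)⁻¹ := by positivity
  have hlog : Real.log s ≤ 4*M * s ^ ((4*M)⁻¹) := by
    calc Real.log s ≤ s ^ (4*M)⁻¹ / (4*M)⁻¹ := Real.log_le_rpow_div hs0.le hε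
      _ = 4*M * s ^ ((4*M)⁻¹) := by rw [div_eq_mul_inv, inv_inv]; ring
  have h1 : (Real.log s)^M ≤ (4*M * s ^ ((4*M)⁻¹))^M :=
    Real.rpow_le_rpow hls0 hlog hM0.le
  have h2 : (4*M * s ^ ((4*M)⁻¹))^M = (4*M)^M * s ^ ((4*M)⁻¹ * M) := by
    rw [Real.mul_rpow (by positivity) (Real.rpow_nonneg hs0.le _), ← Real.rpow_mul hs0.le]
  have hεM : (4*M)⁻¹ * M = (4⁻¹:ℝ) := by field_simp
  have h3 : (4*M)^M ≤ s ^ (4⁻¹:ℝ) := by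
    calc (4*M)^M = ((4*M)^(4*M))^(4⁻¹:ℝ) := by
          rw [← Real.rpow_mul (by positivity)]; congr 1; ring
      _ ≤ s ^ (4⁻¹:ℝ) := Real.rpow_le_rpow (Real.rpow_nonneg (by positivity) _) hsM (by norm_num)
  have hC : (Real.log s) ^ M ≤ Real.sqrt s := by
    calc (Real.log s) ^ M ≤ (4*M)^M * s ^ (4⁻¹:ℝ) := by
          rw [hεM] at h2; exact h1.trans (le_of_eq h2)
      _ ≤ s ^ (4⁻¹:ℝ) * s ^ (4⁻¹:ℝ) :=
          mul_le_mul_of_nonneg_right h3 (Real.rpow_nonneg hs0.le _)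
      _ = s ^ (2⁻¹:ℝ) := by rw [← Real.rpow_add hs0]; norm_num
      _ = Real.sqrt s := by rw [Real.sqrt_eq_rpow]; norm_num
  calc hFun k N s ≤ (Real.log s)^(2*k) * (Real.log s) ^ (2*N) := hA
    _ = (Real.log s) ^ M := hB
    _ ≤ Real.sqrt s := hC

end

/-- There is `C_{k,N} > 0` so that for all `s ≥ Φ⁰_{k,N}(E)` the generalized
inverse of the Young conjugate `Φ̃⁰` of `Φ⁰_{k,N}` satisfies
`(Φ̃⁰)⁻¹(s) ≥ C_{k,N}·(ln s)²·(ln^[2] s)²⋯(ln^[k-1] s)²·(ln^[k] s)^(2N)`. -/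
theorem genInv_youngConj_Phi0_lower_bound
    (k : ℕ) (hk : 1 ≤ k) (N : ℝ) (hN : 1 < N) :
    ∃ C : ℝ, 0 < C ∧ ∀ s, Phi0 k N (Real.exp^[k] (2 * N)) ≤ s →
      C * ((∏ i ∈ Finset.Ico 1 k, (Real.log^[i] s) ^ 2) *
          (Real.log^[k] s) ^ (2 * N)) ≤
        genInv (youngConj (Phi0 k N)) s := by
  have hN2 : (2:ℝ) ≤ 2*N := by linarith
  set E := Real.exp^[k] (2*N) with hEdef
  have hE2 : (2:ℝ) ≤ E := le_trans hN2 (le_expIter _ _)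
  have hE0 : (0:ℝ) < E := by linarith
  set M : ℝ := 2*(k:ℝ) + 2*N with hMdef
  have hk1 : (1:ℝ) ≤ (k:ℝ) := Nat.one_le_cast.2 hk
  have hM0 : (0:ℝ) < M := by rw [hMdef]; linarith
  set T : ℝ := max (max (E^2) (Real.exp^[k] 2)) ((4*M) ^ (4*M)) with hTdef
  have hTE2 : E^2 ≤ T := le_trans (le_max_left _ _) (le_max_left _ _)
  have hTexp : Real.exp^[k] 2 ≤ T := le_trans (le_max_right _ _) (le_max_left _ _)
  have hTM : (4*M)^(4*M) ≤ T := le_max_right _ _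
  have hTE : E ≤ T := by nlinarith
  have hfT1 : 1 ≤ hFun k N T := one_le_hFun hN hTE
  set c₁ : ℝ := (4⁻¹:ℝ)^k * (2⁻¹:ℝ) ^ (2*N) with hc1def
  set c₂ : ℝ := (2 * hFun k N T)⁻¹ with hc2def
  have hc10 : 0 < c₁ := by
    rw [hc1def]
    have := Real.rpow_pos_of_pos (show (0:ℝ) < 2⁻¹ by norm_num) (2*N)
    positivity
  have hc20 : 0 < c₂ := by rw [hc2def]; exact inv_pos.2 (by linarith)
  have hc11 : c₁ ≤ 1 := by
    rw [hc1def]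
    have h1 : ((4:ℝ)⁻¹)^k ≤ 1 := pow_le_one₀ (by norm_num) (by norm_num)
    have h2 : ((2:ℝ)⁻¹) ^ (2*N) ≤ 1 :=
      Real.rpow_le_one (by norm_num) (by norm_num) (by linarith)
    have h3 : (0:ℝ) ≤ ((4:ℝ)⁻¹)^k := by positivity
    nlinarith
  refine ⟨min c₁ c₂, lt_min hc10 hc20, fun s hs => ?_⟩
  have hΦE : Phi0 k N E = E * hFun k N E := Phi0_of_le le_rfl
  have hfE1 : 1 ≤ hFun k N E := one_le_hFun hN le_rfl
  have hsE : E ≤ s := by rw [hΦE] at hs; nlinarith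
  have hs0 : 0 < s := by linarith
  have hfs1 : 1 ≤ hFun k N s := one_le_hFun hN hsE
  show min c₁ c₂ * hFun k N s ≤ genInv (youngConj (Phi0 k N)) s
  unfold genInv
  apply le_csInf
  · refine ⟨max ((s + Phi0 k N E)/E) 0, le_max_right _ _, ?_⟩
    have hkey := le_youngConj' hN (k := k) (t := max ((s + Phi0 k N E)/E) 0) (le_max_right _ _)
    have h1 : (s + Phi0 k N E)/E * E = s + Phi0 k N E := div_mul_cancel₀ _ (ne_of_gt hE0)
    have h2 : (s + Phi0 k N E)/E * E ≤ max ((s + Phi0 k N E)/E) 0 * E :=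
      mul_le_mul_of_nonneg_right (le_max_left _ _) hE0.le
    linarith
  · rintro t ⟨ht0, hts⟩
    rcases le_total s T with hsT | hTs
    · have hthalf : (2:ℝ)⁻¹ ≤ t := by
        by_contra hcon; push_neg at hcon
        have hle : youngConj (Phi0 k N) t ≤ t * E :=
          youngConj_le' hN ht0 le_rfl (by linarith : t ≤ hFun k N E)
        have h4 : t * E < 2⁻¹ * E := by nlinarith
        nlinarith [hΦE]
      have hfsT : hFun k N s ≤ hFun k N T := hFun_le_hFun hN hsE hsT
      have hTne : hFun k N T ≠ 0 := by linarith
      have hc2T : c₂ * hFun k N T = 2⁻¹ := by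
        rw [hc2def, mul_inv, mul_assoc, inv_mul_cancel₀ hTne, mul_one]
      calc min c₁ c₂ * hFun k N s ≤ c₂ * hFun k N s :=
            mul_le_mul_of_nonneg_right (min_le_right _ _) (by linarith)
        _ ≤ c₂ * hFun k N T := mul_le_mul_of_nonneg_left hfsT hc20.le
        _ = 2⁻¹ := hc2T
        _ ≤ t := hthalf
    · by_contra hcon; push_neg at hcon
      have hs2 : Real.exp^[k] 2 ≤ s := hTexp.trans hTs
      have hsM : (4*M)^(4*M) ≤ s := hTM.trans hTs
      have hEu : E ≤ Real.sqrt s := by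
        have h1 : E^2 ≤ s := hTE2.trans hTs
        have h2 := Real.sqrt_le_sqrt h1
        rwa [Real.sqrt_sq hE0.le] at h2
      have hkey1 : c₁ * hFun k N s ≤ hFun k N (Real.sqrt s) := by
        rw [hc1def]
        exact hFun_sqrt hk hN hs2 hsE
      have htu : t ≤ hFun k N (Real.sqrt s) := by
        have hmm : min c₁ c₂ * hFun k N s ≤ c₁ * hFun k N s :=
          mul_le_mul_of_nonneg_right (min_le_left _ _) (by linarith)
        linarith
      have hup : youngConj (Phi0 k N) t ≤ t * Real.sqrt s :=
        youngConj_le' hN ht0 hEu htu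
      have hsq0 : 0 < Real.sqrt s := Real.sqrt_pos.2 hs0
      have hfineq : hFun k N s ≤ Real.sqrt s := hFun_le_sqrt hk hN hs2 hsM
      have h5 : t * Real.sqrt s < (min c₁ c₂ * hFun k N s) * Real.sqrt s :=
        mul_lt_mul_of_pos_right hcon hsq0
      have h6 : min c₁ c₂ * hFun k N s ≤ hFun k N s :=
        mul_le_of_le_one_left (by linarith) (le_trans (min_le_left c₁ c₂) hc11)
      have h7 : hFun k N s * Real.sqrt s ≤ s := by
        have h8 := mul_le_mul_of_nonneg_right hfineq hsq0.le
        rwa [Real.mul_self_sqrt hs0.le] at h8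
      have hlt : s < s := by
        calc s ≤ youngConj (Phi0 k N) t := hts
        _ ≤ t * Real.sqrt s := hup
        _ < (min c₁ c₂ * hFun k N s) * Real.sqrt s := h5
        _ ≤ hFun k N s * Real.sqrt s := mul_le_mul_of_nonneg_right h6 hsq0.le
        _ ≤ s := h7
      exact absurd hlt (lt_irrefl s)
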